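/- Let m ≥ 1, n ≥ 1, r ≥ 1 be natural numbers, let κ₀ ≥ 0 be real, and let S : Fin m → Fin m → Fin m → Fin m → ℂ be such that for every Hermitian positive semidefinite matrix ξ : Matrix (Fin m) (Fin m) ℂ one has Re (∑_{α,β,γ,δ} S α β γ δ · ξ α β · ξ γ δ) ≤ − κ₀ · ∑_{α,β} ‖ξ α β‖². Let F : Matrix (Fin n) (Fin m) ℂ have rank at most r, and define ξ α β := ∑_p F p α · conj (F p β). Then Re (∑_{α,β,γ,δ} S α β γ δ · ξ α β · ξ γ δ) ≤ − (κ₀ / r) · (∑_{p,α} ‖F p α‖²)². -/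

import Mathlib

open scoped ComplexOrder
open Matrix in

/-- Target-curvature estimate in the proof of Theorem 1.2: if the curvature form of `S` is
bounded above by `−κ₀ |ξ|²` on Hermitian positive semidefinite tensors, then evaluating it
on `ξ = Fᵀ · conj F` for a matrix `F` of rank at most `r` yields the bound
`−(κ₀/r) |∂f|⁴`. -/
theorem target_curvature_estimate (m n r : ℕ) (hm : 1 ≤ m) (hn : 1 ≤ n) (hr : 1 ≤ r)
    (κ₀ : ℝ) (hκ : 0 ≤ κ₀)
    (S : Fin m → Fin m → Fin m → Fin m → ℂ)
    (hS : ∀ ξ : Matrix (Fin m) (Fin m) ℂ, ξ.PosSemidef →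
      (∑ α : Fin m, ∑ β : Fin m, ∑ γ : Fin m, ∑ δ : Fin m,
        S α β γ δ * ξ α β * ξ γ δ).re
      ≤ - κ₀ * ∑ α : Fin m, ∑ β : Fin m, ‖ξ α β‖^2)
    (F : Matrix (Fin n) (Fin m) ℂ) (hF : F.rank ≤ r)
    (ξ : Matrix (Fin m) (Fin m) ℂ)
    (hξ : ∀ α β : Fin m, ξ α β = ∑ p : Fin n, F p α * (starRingEnd ℂ) (F p β)) :
    (∑ α : Fin m, ∑ β : Fin m, ∑ γ : Fin m, ∑ δ : Fin m,
        S α β γ δ * ξ α β * ξ γ δ).re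
      ≤ - (κ₀ / r) * (∑ p : Fin n, ∑ α : Fin m, ‖F p α‖^2)^2 := by
  classical
  -- ξ = Fᵀ * (Fᵀ)ᴴ
  have hξmat : ξ = Fᵀ * (Fᵀ)ᴴ := by
    ext α β
    rw [hξ]
    simp [Matrix.mul_apply, Matrix.conjTranspose_apply, Matrix.transpose_apply]
  have hPSD : ξ.PosSemidef := hξmat ▸ Matrix.posSemidef_self_mul_conjTranspose Fᵀ
  have hH : ξ.IsHermitian := hPSD.isHermitian
  set lam := hH.eigenvalues with hlam
  have hlam0 : ∀ i, 0 ≤ lam i := hPSD.eigenvalues_nonneg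
  -- rank bound
  have hrank : ξ.rank ≤ r := by
    rw [hξmat, Matrix.rank_self_mul_conjTranspose, Matrix.rank_transpose]
    exact hF
  set U : Matrix (Fin m) (Fin m) ℂ := (hH.eigenvectorUnitary : Matrix (Fin m) (Fin m) ℂ)
    with hU
  have hUU : star U * U = 1 := Matrix.UnitaryGroup.star_mul_self _
  set D : Matrix (Fin m) (Fin m) ℂ := Matrix.diagonal (RCLike.ofReal ∘ lam) with hD
  have hspec : ξ = U * D * star U := hH.spectral_theorem
  -- trace of ξ as sum of eigenvalues
  have htrace : ξ.trace = ((∑ i, lam i : ℝ) : ℂ) := by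
    rw [hspec, Matrix.trace_mul_cycle, hUU, one_mul, hD, Matrix.trace_diagonal]
    push_cast
    simp [Function.comp]
  -- |∂f|² equals sum of eigenvalues
  have hT : (∑ p : Fin n, ∑ α : Fin m, ‖F p α‖^2) = ∑ i, lam i := by
    have h1 := congrArg Complex.re htrace
    rw [Complex.ofReal_re] at h1
    rw [← h1, Matrix.trace]
    simp only [Matrix.diag_apply, hξ, Complex.re_sum]
    rw [Finset.sum_comm]
    congr 1; ext α; congr 1; ext p
    simp [Complex.mul_conj, Complex.normSq_eq_norm_sq, ← Complex.ofReal_pow]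
  -- Frobenius norm squared equals sum of eigenvalue squares
  have hN : (∑ α : Fin m, ∑ β : Fin m, ‖ξ α β‖^2) = ∑ i, (lam i)^2 := by
    have e1 : ξ * ξ = U * (D * D) * star U := by
      rw [hspec]
      calc (U * D * star U) * (U * D * star U)
          = U * D * ((star U * U) * (D * star U)) := by
            simp only [Matrix.mul_assoc]
        _ = U * (D * D) * star U := by
            rw [hUU, one_mul]
            simp only [Matrix.mul_assoc]
    have h1 : (ξ * ξ).trace = ((∑ i, (lam i)^2 : ℝ) : ℂ) := by
      rw [e1, Matrix.trace_mul_cycle, hUU, one_mul, hD,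
        Matrix.diagonal_mul_diagonal, Matrix.trace_diagonal]
      push_cast
      simp [Function.comp, sq]
    have h2 : ((ξ * ξ).trace).re = ∑ α : Fin m, ∑ β : Fin m, ‖ξ α β‖^2 := by
      rw [Matrix.trace]
      simp only [Matrix.diag_apply, Matrix.mul_apply, Complex.re_sum]
      congr 1; ext α; congr 1; ext β
      have h3 : ξ β α = (starRingEnd ℂ) (ξ α β) := by
        conv_lhs => rw [← hH.eq]
        rfl
      rw [h3]
      simp [Complex.mul_conj, Complex.normSq_eq_norm_sq, ← Complex.ofReal_pow]
    rw [← h2, h1, Complex.ofReal_re]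
  -- Cauchy-Schwarz on nonzero eigenvalues
  have key : (∑ p : Fin n, ∑ α : Fin m, ‖F p α‖^2)^2 ≤
      r * (∑ α : Fin m, ∑ β : Fin m, ‖ξ α β‖^2) := by
    rw [hT, hN]
    set s : Finset (Fin m) := Finset.univ.filter (fun i => lam i ≠ 0) with hs
    have hsum : ∑ i, lam i = ∑ i ∈ s, lam i := by
      rw [hs]
      exact (Finset.sum_filter_ne_zero _).symm
    have hcard : (s.card : ℝ) ≤ r := by
      have h4 : ξ.rank = s.card := by
        rw [hH.rank_eq_card_non_zero_eigs, hs, Fintype.card_subtype]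
      exact_mod_cast h4 ▸ hrank
    calc (∑ i, lam i)^2 = (∑ i ∈ s, lam i)^2 := by rw [hsum]
      _ ≤ s.card * ∑ i ∈ s, (lam i)^2 := sq_sum_le_card_mul_sum_sq
      _ ≤ r * ∑ i, (lam i)^2 := by
          apply mul_le_mul hcard (Finset.sum_le_sum_of_subset_of_nonneg (Finset.subset_univ s)
            (fun i _ _ => sq_nonneg _)) (Finset.sum_nonneg (fun i _ => sq_nonneg _))
            (by positivity)
  refine (hS ξ hPSD).trans ?_
  have hrpos : (0:ℝ) < r := by exact_mod_cast hr
  rw [neg_mul, neg_mul, neg_le_neg_iff, div_mul_eq_mul_div, div_le_iff₀ hrpos]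
  calc κ₀ * (∑ p : Fin n, ∑ α : Fin m, ‖F p α‖^2)^2
      ≤ κ₀ * (r * (∑ α : Fin m, ∑ β : Fin m, ‖ξ α β‖^2)) :=
        mul_le_mul_of_nonneg_left key hκ
    _ = κ₀ * (∑ α : Fin m, ∑ β : Fin m, ‖ξ α β‖^2) * r := by ring
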